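/- Let F be an N×n matrix, G an N×M matrix, Q' a symmetric positive-semidefinite N×N matrix, R' a symmetric positive-semidefinite M×M matrix, and Σ a symmetric positive-definite N×N matrix, and fix x ∈ ℝⁿ. For θ ∈ ℝᴹ define ℓ(θ) = −log E_{v ~ N(0, Σ)}[exp(−½·(F x + G θ + v)ᵀ Q' (F x + G θ + v) − ½·θᵀ R' θ)]. Then ℓ(θ) = ½·(F x + G θ)ᵀ[Σ⁻¹ − (Σ Q' Σ + Σ)⁻¹](F x + G θ) + ½·θᵀ R' θ + ½·log|Q' Σ + I|. In particular, ℓ is a quadratic function of θ with Hessian matrix Gᵀ[Σ⁻¹ − (Σ Q' Σ + Σ)⁻¹]G + R' and linear coefficient vector Gᵀ[Σ⁻¹ − (Σ Q' Σ + Σ)⁻¹]F x. -/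

import Mathlib

open Matrix MeasureTheory
open scoped NNReal ENNReal

/-- Density of the multivariate Gaussian `N(m, S)` on `ℝᵏ` with respect to Lebesgue measure. -/
noncomputable def gaussianPdf {k : ℕ} (m : Fin k → ℝ) (S : Matrix (Fin k) (Fin k) ℝ)
    (x : Fin k → ℝ) : ℝ :=
  (Real.sqrt ((2 * Real.pi) ^ k * S.det))⁻¹ *
    Real.exp (-(1 / 2) * ((x - m) ⬝ᵥ (S⁻¹ *ᵥ (x - m))))

/-- The multivariate Gaussian probability measure `N(m, S)` on `ℝᵏ`. -/
noncomputable def gaussianMeasure {k : ℕ} (m : Fin k → ℝ) (S : Matrix (Fin k) (Fin k) ℝ) :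
    Measure (Fin k → ℝ) :=
  volume.withDensity (fun x => ENNReal.ofReal (gaussianPdf m S x))

lemma sqrt_pow' {a : ℝ} (ha : 0 ≤ a) (N : ℕ) : Real.sqrt a ^ N = Real.sqrt (a ^ N) := by
  symm
  rw [Real.sqrt_eq_iff_eq_sq (pow_nonneg ha N) (pow_nonneg (Real.sqrt_nonneg a) N),
    ← pow_mul, mul_comm N 2, pow_mul, Real.sq_sqrt ha]

lemma gauss1d : ∫ x : ℝ, Real.exp (-(1/2) * (x * x)) = Real.sqrt (2 * Real.pi) := by
  have h := integral_gaussian (1/2 : ℝ)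
  rw [show Real.pi / (1/2) = 2 * Real.pi by ring] at h
  rw [← h]
  congr 1 with x
  rw [sq]

lemma gaussNd {N : ℕ} : ∫ u : Fin N → ℝ, Real.exp (-(1/2) * (u ⬝ᵥ u))
    = Real.sqrt ((2 * Real.pi) ^ N) := by
  have h : ∀ u : Fin N → ℝ,
      Real.exp (-(1/2) * (u ⬝ᵥ u)) = ∏ i, Real.exp (-(1/2) * (u i * u i)) := by
    intro u
    rw [← Real.exp_sum, dotProduct, Finset.mul_sum]
  simp_rw [h]
  rw [MeasureTheory.volume_pi, MeasureTheory.integral_fintype_prod_eq_pow (ι := Fin N) (fun x : ℝ => Real.exp (-(1/2) * (x*x))),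
    gauss1d, sqrt_pow' (by positivity)]
  simp

lemma symm_dot {N : ℕ} {A : Matrix (Fin N) (Fin N) ℝ} (hA : Aᵀ = A) (x y : Fin N → ℝ) :
    (A *ᵥ x) ⬝ᵥ y = x ⬝ᵥ (A *ᵥ y) := by
  have h0 : A *ᵥ x = x ᵥ* A := by
    conv_lhs => rw [← hA]
    exact Matrix.mulVec_transpose A x
  rw [h0, ← Matrix.dotProduct_mulVec]

open scoped MatrixOrder in
lemma gauss_lin {N : ℕ} (M : Matrix (Fin N) (Fin N) ℝ) (hM : M.PosDef) (b : Fin N → ℝ) :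
    ∫ v : Fin N → ℝ, Real.exp (-(1/2) * (v ⬝ᵥ (M *ᵥ v)) + b ⬝ᵥ v)
      = Real.sqrt ((2 * Real.pi) ^ N / M.det) * Real.exp ((1/2) * (b ⬝ᵥ (M⁻¹ *ᵥ b))) := by
  set A := CFC.sqrt M with hAdef
  have hAsymm : Aᵀ = A := by
    have h := (CFC.sqrt_nonneg M).posSemidef.1
    rwa [Matrix.IsHermitian, Matrix.conjTranspose_eq_transpose_of_trivial] at h
  have hAA : A * A = M := CFC.sqrt_mul_sqrt_self M hM.posSemidef.nonneg
  have hdetM : 0 < M.det := hM.det_pos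
  have hdetA : A.det ≠ 0 := by
    intro h
    rw [← hAA, Matrix.det_mul, h, mul_zero] at hdetM
    exact lt_irrefl _ hdetM
  have hU : IsUnit A.det := isUnit_iff_ne_zero.2 hdetA
  have habs : |A.det| = Real.sqrt M.det := by
    rw [← Real.sqrt_sq_eq_abs]
    congr 1
    rw [sq, ← Matrix.det_mul, hAA]
  have hAinv : A * A⁻¹ = 1 := Matrix.mul_nonsing_inv A hU
  have hAinvsymm : (A⁻¹)ᵀ = A⁻¹ := by rw [Matrix.transpose_nonsing_inv, hAsymm]
  set c : Fin N → ℝ := A⁻¹ *ᵥ b with hc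
  have key : ∀ v : Fin N → ℝ, -(1/2) * (v ⬝ᵥ (M *ᵥ v)) + b ⬝ᵥ v
      = (1/2) * (b ⬝ᵥ (M⁻¹ *ᵥ b)) + -(1/2) * ((A *ᵥ v - c) ⬝ᵥ (A *ᵥ v - c)) := by
    intro v
    have h1 : (A *ᵥ v) ⬝ᵥ (A *ᵥ v) = v ⬝ᵥ (M *ᵥ v) := by
      rw [symm_dot hAsymm, Matrix.mulVec_mulVec, hAA]
    have h2 : c ⬝ᵥ (A *ᵥ v) = b ⬝ᵥ v := by
      rw [← symm_dot hAsymm c v, hc, Matrix.mulVec_mulVec, hAinv, Matrix.one_mulVec]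
    have h3 : c ⬝ᵥ c = b ⬝ᵥ (M⁻¹ *ᵥ b) := by
      rw [hc, symm_dot hAinvsymm, Matrix.mulVec_mulVec, ← Matrix.mul_inv_rev, hAA]
    rw [sub_dotProduct, dotProduct_sub, dotProduct_sub, h1,
      dotProduct_comm (A *ᵥ v) c, h2, h3]
    ring
  simp_rw [key, Real.exp_add, integral_const_mul]
  rw [mul_comm]
  congr 1
  set f : (Fin N → ℝ) → ℝ := fun u => Real.exp (-(1/2) * ((u - c) ⬝ᵥ (u - c))) with hf
  have hfc : Continuous f := by
    simp only [hf, dotProduct, Pi.sub_apply]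
    fun_prop
  have hmap : Measure.map (Matrix.toLin' A) volume
      = ENNReal.ofReal |A.det|⁻¹ • volume := by
    rw [Real.map_matrix_volume_pi_eq_smul_volume_pi hdetA, abs_inv]
  have hcv : ∫ v : Fin N → ℝ, f (A *ᵥ v) = |A.det|⁻¹ * ∫ u : Fin N → ℝ, f u := by
    have h1 : ∫ v : Fin N → ℝ, f (A *ᵥ v)
        = ∫ u, f u ∂(Measure.map (Matrix.toLin' A) volume) := by
      rw [integral_map (Continuous.aemeasurable (LinearMap.continuous_on_pi _))
        hfc.aestronglyMeasurable]
      simp_rw [Matrix.toLin'_apply]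
    rw [h1, hmap, integral_smul_measure, ENNReal.toReal_ofReal (by positivity), smul_eq_mul]
  have hshift : ∫ u : Fin N → ℝ, f u = Real.sqrt ((2 * Real.pi) ^ N) := by
    have h := integral_sub_right_eq_self (μ := (volume : Measure (Fin N → ℝ)))
      (fun w => Real.exp (-(1/2) * (w ⬝ᵥ w))) c
    rw [hf]
    simp only at h ⊢
    rw [h, gaussNd]
  calc ∫ v : Fin N → ℝ, Real.exp (-(1/2) * ((A *ᵥ v - c) ⬝ᵥ (A *ᵥ v - c)))
      = ∫ v : Fin N → ℝ, f (A *ᵥ v) := rfl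
    _ = |A.det|⁻¹ * Real.sqrt ((2 * Real.pi) ^ N) := by rw [hcv, hshift]
    _ = Real.sqrt ((2 * Real.pi) ^ N / M.det) := by
        rw [habs, Real.sqrt_div (by positivity), div_eq_inv_mul]

lemma aux_mul_inv_cancel_left {N : ℕ} {W : Matrix (Fin N) (Fin N) ℝ} (h : W * W⁻¹ = 1)
    (X : Matrix (Fin N) (Fin N) ℝ) : W * (W⁻¹ * X) = X := by
  rw [← Matrix.mul_assoc, h, Matrix.one_mul]

lemma mat_id {N : ℕ} (Q' S : Matrix (Fin N) (Fin N) ℝ) (hQ : Q'.PosSemidef) (hS : S.PosDef) :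
    S⁻¹ - (S * Q' * S + S)⁻¹ = Q' - Q' * (S⁻¹ + Q')⁻¹ * Q' := by
  set W : Matrix (Fin N) (Fin N) ℝ := S⁻¹ + Q' with hW
  have hWpd : W.PosDef := hS.inv.add_posSemidef hQ
  have hSU : IsUnit S.det := isUnit_iff_ne_zero.2 hS.det_pos.ne'
  have hWU : IsUnit W.det := isUnit_iff_ne_zero.2 hWpd.det_pos.ne'
  have hSl : S * S⁻¹ = 1 := Matrix.mul_nonsing_inv S hSU
  have hWl : W * W⁻¹ = 1 := Matrix.mul_nonsing_inv W hWU
  have hWr : W⁻¹ * W = 1 := Matrix.nonsing_inv_mul W hWU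
  have hA : S * Q' * S + S = S * W * S := by
    rw [hW, Matrix.mul_add, Matrix.add_mul, hSl, Matrix.one_mul, add_comm]
  have hB : (S * W * S)⁻¹ = S⁻¹ * (W⁻¹ * S⁻¹) := by
    rw [Matrix.mul_inv_rev, Matrix.mul_inv_rev]
  have hQ'eq : Q' = W - S⁻¹ := by rw [hW]; abel
  rw [hA, hB]
  conv_rhs => rw [hQ'eq]
  simp only [Matrix.sub_mul, Matrix.mul_sub, Matrix.mul_assoc, hWr, Matrix.mul_one,
    aux_mul_inv_cancel_left hWl]
  abel

lemma det_id {N : ℕ} (Q' S : Matrix (Fin N) (Fin N) ℝ) (hS : S.PosDef) :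
    S.det * (S⁻¹ + Q').det = (Q' * S + 1).det := by
  have hSU : IsUnit S.det := isUnit_iff_ne_zero.2 hS.det_pos.ne'
  rw [← Matrix.det_mul, Matrix.mul_add, Matrix.mul_nonsing_inv S hSU,
    Matrix.det_one_add_mul_comm, add_comm]

/-- **LEQR loss.** The exponential-utility (risk-seeking) loss
`ℓ(θ) = −log E_{v ~ N(0,Σ)}[exp(−½ (Fx + Gθ + v)ᵀ Q' (Fx + Gθ + v) − ½ θᵀ R' θ)]`
equals the quadratic
`½ (Fx + Gθ)ᵀ[Σ⁻¹ − (ΣQ'Σ + Σ)⁻¹](Fx + Gθ) + ½ θᵀ R' θ + ½ log|Q'Σ + I|` in `θ`. -/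
theorem leqr_loss_quadratic {N n M : ℕ}
    (F : Matrix (Fin N) (Fin n) ℝ) (G : Matrix (Fin N) (Fin M) ℝ)
    (Q' : Matrix (Fin N) (Fin N) ℝ) (hQ : Q'.PosSemidef)
    (R' : Matrix (Fin M) (Fin M) ℝ) (hR : R'.PosSemidef)
    (S : Matrix (Fin N) (Fin N) ℝ) (hS : S.PosDef)
    (x : Fin n → ℝ) (θ : Fin M → ℝ) :
    -Real.log (∫ v,
        Real.exp (-(1 / 2) * ((F *ᵥ x + G *ᵥ θ + v) ⬝ᵥ (Q' *ᵥ (F *ᵥ x + G *ᵥ θ + v)))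
          - (1 / 2) * (θ ⬝ᵥ (R' *ᵥ θ)))
        ∂(gaussianMeasure 0 S))
      = (1 / 2) * ((F *ᵥ x + G *ᵥ θ) ⬝ᵥ ((S⁻¹ - (S * Q' * S + S)⁻¹) *ᵥ (F *ᵥ x + G *ᵥ θ)))
        + (1 / 2) * (θ ⬝ᵥ (R' *ᵥ θ))
        + (1 / 2) * Real.log (Q' * S + 1).det := by
  set a : Fin N → ℝ := F *ᵥ x + G *ᵥ θ with ha
  set W : Matrix (Fin N) (Fin N) ℝ := S⁻¹ + Q' with hW
  have hWpd : W.PosDef := hS.inv.add_posSemidef hQ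
  have hQsymm : Q'ᵀ = Q' := by
    have h := hQ.1
    rwa [Matrix.IsHermitian, Matrix.conjTranspose_eq_transpose_of_trivial] at h
  have hdS : (0:ℝ) < S.det := hS.det_pos
  have hdW : (0:ℝ) < W.det := hWpd.det_pos
  set K : ℝ := Real.sqrt ((2 * Real.pi) ^ N * S.det) with hK
  have hKpos : 0 < K := Real.sqrt_pos.2 (by positivity)
  set b : Fin N → ℝ := -(Q' *ᵥ a) with hb
  -- Step 1: reduce the withDensity integral to a Lebesgue integral
  have hpdf_nonneg : ∀ v, 0 ≤ gaussianPdf (0 : Fin N → ℝ) S v := by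
    intro v
    unfold gaussianPdf
    positivity
  have hpdf_meas : Measurable (fun v => Real.toNNReal (gaussianPdf (0 : Fin N → ℝ) S v)) := by
    apply Measurable.real_toNNReal
    apply Continuous.measurable
    unfold gaussianPdf
    simp only [dotProduct, Matrix.mulVec, Pi.sub_apply]
    fun_prop
  have h1 : ∀ g : (Fin N → ℝ) → ℝ, ∫ v, g v ∂(gaussianMeasure 0 S)
      = ∫ v, gaussianPdf (0 : Fin N → ℝ) S v * g v := by
    intro g
    have : gaussianMeasure (0 : Fin N → ℝ) S
        = volume.withDensity (fun v => ((Real.toNNReal (gaussianPdf 0 S v) : ℝ≥0) : ℝ≥0∞)) := rfl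
    rw [this, integral_withDensity_eq_integral_smul hpdf_meas g]
    congr 1 with v
    rw [NNReal.smul_def, Real.coe_toNNReal _ (hpdf_nonneg v), smul_eq_mul]
  rw [h1]
  -- Step 2: pointwise rewriting of the integrand
  have hcross : ∀ v, v ⬝ᵥ (Q' *ᵥ a) = a ⬝ᵥ (Q' *ᵥ v) := by
    intro v
    rw [← symm_dot hQsymm v a, dotProduct_comm]
  have hpt : ∀ v : Fin N → ℝ,
      gaussianPdf (0 : Fin N → ℝ) S v
        * Real.exp (-(1 / 2) * ((a + v) ⬝ᵥ (Q' *ᵥ (a + v))) - (1 / 2) * (θ ⬝ᵥ (R' *ᵥ θ)))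
      = (K⁻¹ * Real.exp (-(1/2) * (θ ⬝ᵥ (R' *ᵥ θ)) + -(1/2) * (a ⬝ᵥ (Q' *ᵥ a))))
        * Real.exp (-(1/2) * (v ⬝ᵥ (W *ᵥ v)) + b ⬝ᵥ v) := by
    intro v
    unfold gaussianPdf
    rw [sub_zero, ← hK, mul_assoc, mul_assoc, ← Real.exp_add, ← Real.exp_add]
    congr 2
    simp only [Matrix.mulVec_add, dotProduct_add, add_dotProduct, hW,
      Matrix.add_mulVec, hb, neg_dotProduct, symm_dot hQsymm, hcross]
    ring
  simp_rw [hpt]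
  rw [integral_const_mul, gauss_lin W hWpd b]
  -- Step 3: simplify b ⬝ᵥ W⁻¹ b
  have hbW : b ⬝ᵥ (W⁻¹ *ᵥ b) = (Q' *ᵥ a) ⬝ᵥ (W⁻¹ *ᵥ (Q' *ᵥ a)) := by
    rw [hb, neg_dotProduct, Matrix.mulVec_neg, dotProduct_neg, neg_neg]
  -- Step 4: quadratic form identity
  have hquad : a ⬝ᵥ ((S⁻¹ - (S * Q' * S + S)⁻¹) *ᵥ a)
      = a ⬝ᵥ (Q' *ᵥ a) - (Q' *ᵥ a) ⬝ᵥ (W⁻¹ *ᵥ (Q' *ᵥ a)) := by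
    rw [mat_id Q' S hQ hS, ← hW, Matrix.sub_mulVec, dotProduct_sub]
    congr 1
    rw [← Matrix.mulVec_mulVec, ← Matrix.mulVec_mulVec, ← symm_dot hQsymm]
  -- Step 5: determinant identity
  have hdet : S.det * W.det = (Q' * S + 1).det := det_id Q' S hS
  -- Step 6: take logarithms
  have hCpos : (0:ℝ) < Real.sqrt ((2 * Real.pi) ^ N / W.det) := Real.sqrt_pos.2 (by positivity)
  rw [Real.log_mul (mul_ne_zero (inv_ne_zero hKpos.ne') (Real.exp_ne_zero _))
      (mul_ne_zero hCpos.ne' (Real.exp_ne_zero _)),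
    Real.log_mul (inv_ne_zero hKpos.ne') (Real.exp_ne_zero _),
    Real.log_mul hCpos.ne' (Real.exp_ne_zero _),
    Real.log_exp, Real.log_exp, Real.log_inv, hK,
    Real.log_sqrt (mul_nonneg (by positivity) hdS.le),
    Real.log_sqrt (div_nonneg (by positivity) hdW.le),
    Real.log_mul (by positivity) hdS.ne', Real.log_div (by positivity) hdW.ne',
    hbW, hquad, ← hdet, Real.log_mul hdS.ne' hdW.ne']
  ring
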